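/- Let 0<β<1, δ>0, ϖ<0 with βδ^{1-ρ}<1 and ρ≥1, and define T(f) = H(1, δf + ϖ) on the domain [−ϖ/δ, ∞), where H(1,z) = ((1−β) + β z^{1-ρ})^{1/(1-ρ)} for ρ>1 (with H(1,0)=0) and H(1,z) = e^{β ln z} = z^β for ρ=1 (with H(1,0)=0). Then T(−ϖ/δ) = 0 < −ϖ/δ, T is strictly increasing and concave on its domain, lim_{f↓−ϖ/δ} T'(f) = +∞ when ρ≤1 and = (βδ^{1-ρ})^{1/(1-ρ)} when ρ>1, and lim_{f→∞} T'(f) = (βδ^{1-ρ})^{1/(1-ρ)} < 1 when ρ<1 and = 0 when ρ≥1. -/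

import Mathlib

open Filter Topology Set

/-- The single-state recursive utility map `T(f) = H(1, δ f + ϖ)`, with `H(1,z)` the CES
aggregator extended by continuity by `H(1,0) = 0` (case `ρ ≥ 1`). -/
noncomputable def T9 (β ρ δ ϖ : ℝ) (f : ℝ) : ℝ :=
  if ρ = 1 then (δ * f + ϖ) ^ β
  else if δ * f + ϖ = 0 then 0
  else ((1 - β) + β * (δ * f + ϖ) ^ (1 - ρ)) ^ (1 / (1 - ρ))

section aux

variable {β ρ δ ϖ : ℝ}

lemma tendsto_rpow_nhdsGT_zero_nhdsGT_zero {c : ℝ} (hc : 0 < c) :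
    Tendsto (fun w : ℝ => w ^ c) (𝓝[>] (0:ℝ)) (𝓝[>] 0) := by
  apply tendsto_nhdsWithin_of_tendsto_nhds_of_eventually_within
  · have h := (Real.continuousAt_rpow_const 0 c (Or.inr hc.le)).tendsto
    rw [Real.zero_rpow hc.ne'] at h
    exact h.mono_left nhdsWithin_le_nhds
  · filter_upwards [self_mem_nhdsWithin] with w hw
    exact Real.rpow_pos_of_pos hw _

lemma tendsto_rpow_nhdsGT_zero_atTop {c : ℝ} (hc : c < 0) :
    Tendsto (fun w : ℝ => w ^ c) (𝓝[>] (0:ℝ)) atTop := by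
  have h1 := tendsto_inv_nhdsGT_zero.comp
    (tendsto_rpow_nhdsGT_zero_nhdsGT_zero (c := -c) (by linarith))
  refine h1.congr' ?_
  filter_upwards [self_mem_nhdsWithin] with w hw
  rw [Function.comp_apply, ← Real.rpow_neg (le_of_lt hw), neg_neg]

lemma z_pos (hδ : 0 < δ) {x : ℝ} (hx : -ϖ / δ < x) : 0 < δ * x + ϖ := by
  have := (div_lt_iff₀ hδ).mp hx; nlinarith

lemma z_nonneg (hδ : 0 < δ) {x : ℝ} (hx : -ϖ / δ ≤ x) : 0 ≤ δ * x + ϖ := by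
  have := (div_le_iff₀ hδ).mp hx; nlinarith

lemma z_tendsto (hδ : 0 < δ) :
    Tendsto (fun f : ℝ => δ * f + ϖ) (𝓝[>] (-ϖ / δ)) (𝓝[>] (0:ℝ)) := by
  apply tendsto_nhdsWithin_of_tendsto_nhds_of_eventually_within
  · have hc : ContinuousAt (fun f : ℝ => δ * f + ϖ) (-ϖ / δ) := by fun_prop
    have hv : δ * (-ϖ / δ) + ϖ = 0 := by field_simp; ring
    rw [← hv]
    exact hc.tendsto.mono_left nhdsWithin_le_nhds
  · filter_upwards [self_mem_nhdsWithin] with x hx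
    exact z_pos hδ hx

lemma z_tendsto_atTop (hδ : 0 < δ) :
    Tendsto (fun f : ℝ => δ * f + ϖ) atTop atTop :=
  tendsto_atTop_add_const_right _ ϖ (tendsto_id.const_mul_atTop hδ)

lemma hasDerivAt_T9_one (hδ : 0 < δ) {f : ℝ} (hz : 0 < δ * f + ϖ) :
    HasDerivAt (T9 β 1 δ ϖ) (β * δ * (δ * f + ϖ) ^ (β - 1)) f := by
  have h1 : HasDerivAt (fun f : ℝ => δ * f + ϖ) δ f := by
    simpa using ((hasDerivAt_id f).const_mul δ).add_const ϖ
  have h2 := (Real.hasDerivAt_rpow_const (x := δ * f + ϖ) (p := β) (Or.inl hz.ne')).comp f h1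
  have hT : T9 β 1 δ ϖ = fun f => (δ * f + ϖ) ^ β := by funext g; simp [T9]
  rw [hT]
  exact h2.congr_deriv (by ring)

lemma hasDerivAt_T9 (hβ0 : 0 < β) (hβ1 : β < 1) (hδ : 0 < δ) (hρ : 1 < ρ) {f : ℝ}
    (hz : 0 < δ * f + ϖ) :
    HasDerivAt (T9 β ρ δ ϖ)
      (β * δ * ((1 - β) * (δ * f + ϖ) ^ (ρ - 1) + β) ^ (ρ / (1 - ρ))) f := by
  have hne : ρ ≠ 1 := ne_of_gt hρ
  have ha : (1:ℝ) - ρ ≠ 0 := by linarith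
  set z := δ * f + ϖ with hzdef
  set u := (1 - β) + β * z ^ (1 - ρ) with hudef
  have hu_pos : 0 < u := by
    have := Real.rpow_pos_of_pos hz (1 - ρ); nlinarith
  have h1 : HasDerivAt (fun f : ℝ => δ * f + ϖ) δ f := by
    simpa using ((hasDerivAt_id f).const_mul δ).add_const ϖ
  have h2 := (Real.hasDerivAt_rpow_const (x := z) (p := 1 - ρ) (Or.inl hz.ne')).comp f h1
  have h3 : HasDerivAt (fun f : ℝ => (1 - β) + β * (δ * f + ϖ) ^ (1 - ρ))
      (β * ((1 - ρ) * z ^ (1 - ρ - 1) * δ)) f := by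
    exact (h2.const_mul β).const_add (1 - β)
  have hF : HasDerivAt (fun f : ℝ => ((1 - β) + β * (δ * f + ϖ) ^ (1 - ρ)) ^ (1 / (1 - ρ)))
      ((1 / (1 - ρ)) * u ^ (1 / (1 - ρ) - 1) * (β * ((1 - ρ) * z ^ (1 - ρ - 1) * δ))) f := by
    exact (Real.hasDerivAt_rpow_const (x := u) (p := 1 / (1 - ρ)) (Or.inl hu_pos.ne')).comp f h3
  have hev : ∀ᶠ x in 𝓝 f, 0 < δ * x + ϖ := by
    have hc : ContinuousAt (fun x : ℝ => δ * x + ϖ) f := by fun_prop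
    exact hc.eventually_mem (Ioi_mem_nhds hz)
  have heq : T9 β ρ δ ϖ =ᶠ[𝓝 f] fun f : ℝ =>
      ((1 - β) + β * (δ * f + ϖ) ^ (1 - ρ)) ^ (1 / (1 - ρ)) := by
    filter_upwards [hev] with x hx
    simp [T9, hne, ne_of_gt hx]
  have hT := hF.congr_of_eventuallyEq heq
  refine hT.congr_deriv (Eq.symm ?_)
  -- value equality
  have hzz : z ^ (1 - ρ) * z ^ (ρ - 1) = 1 := by
    rw [← Real.rpow_add hz]; norm_num
  have hh : (1 - β) * z ^ (ρ - 1) + β = u * z ^ (ρ - 1) := by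
    rw [hudef, add_mul, mul_assoc, hzz, mul_one]
  have e1 : 1 / (1 - ρ) - 1 = ρ / (1 - ρ) := by field_simp; ring
  have e2 : (ρ - 1) * (ρ / (1 - ρ)) = -ρ := by field_simp; ring
  have e3 : 1 - ρ - 1 = -ρ := by ring
  rw [hh, Real.mul_rpow hu_pos.le (Real.rpow_nonneg hz.le _), ← Real.rpow_mul hz.le,
    e1, e2, e3]
  field_simp

end aux

theorem stmt9 (β ρ δ ϖ : ℝ) (hβ0 : 0 < β) (hβ1 : β < 1) (hδ : 0 < δ) (hϖ : ϖ < 0)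
    (hρ : 1 ≤ ρ) (hgrow : β * δ ^ (1 - ρ) < 1) :
    T9 β ρ δ ϖ (-ϖ / δ) = 0 ∧ 0 < -ϖ / δ ∧
    StrictMonoOn (T9 β ρ δ ϖ) (Ici (-ϖ / δ)) ∧
    ConcaveOn ℝ (Ici (-ϖ / δ)) (T9 β ρ δ ϖ) ∧
    (ρ = 1 → Tendsto (deriv (T9 β ρ δ ϖ)) (𝓝[>] (-ϖ / δ)) atTop) ∧
    (1 < ρ → Tendsto (deriv (T9 β ρ δ ϖ)) (𝓝[>] (-ϖ / δ))
      (𝓝 ((β * δ ^ (1 - ρ)) ^ (1 / (1 - ρ))))) ∧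
    Tendsto (deriv (T9 β ρ δ ϖ)) atTop (𝓝 0) := by
  have hLpos : 0 < -ϖ / δ := div_pos (by linarith) hδ
  have hzL : δ * (-ϖ / δ) + ϖ = 0 := by field_simp; ring
  rcases eq_or_lt_of_le hρ with h1 | h1
  · -- case ρ = 1
    subst h1
    have hT0 : T9 β 1 δ ϖ (-ϖ / δ) = 0 := by
      simp [T9, hzL, Real.zero_rpow hβ0.ne']
    have hHD : ∀ x : ℝ, -ϖ / δ < x →
        HasDerivAt (T9 β 1 δ ϖ) (β * δ * (δ * x + ϖ) ^ (β - 1)) x :=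
      fun x hx => hasDerivAt_T9_one hδ (z_pos hδ hx)
    have hderiv : ∀ x : ℝ, -ϖ / δ < x →
        deriv (T9 β 1 δ ϖ) x = β * δ * (δ * x + ϖ) ^ (β - 1) :=
      fun x hx => (hHD x hx).deriv
    refine ⟨hT0, hLpos, ?_, ?_, ?_, ?_, ?_⟩
    · intro x hx y hy hxy
      simp only [T9, if_pos rfl]
      exact Real.rpow_lt_rpow (z_nonneg hδ hx) (by nlinarith) hβ0
    · apply AntitoneOn.concaveOn_of_deriv (convex_Ici _)
      · intro x hx
        have hca : ContinuousAt (T9 β 1 δ ϖ) x := by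
          have hT : T9 β 1 δ ϖ = fun f => (δ * f + ϖ) ^ β := by funext g; simp [T9]
          rw [hT]
          exact (Real.continuousAt_rpow_const _ β (Or.inr hβ0.le)).comp (by fun_prop)
        exact hca.continuousWithinAt
      · rw [interior_Ici]
        exact fun x hx => (hHD x hx).differentiableAt.differentiableWithinAt
      · rw [interior_Ici]
        intro x hx y hy hxy
        rw [hderiv x hx, hderiv y hy]
        have hzx := z_pos hδ hx
        have hle : (δ * y + ϖ) ^ (β - 1) ≤ (δ * x + ϖ) ^ (β - 1) :=
          Real.rpow_le_rpow_of_nonpos hzx (by nlinarith) (by linarith)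
        exact mul_le_mul_of_nonneg_left hle (by positivity)
    · intro _
      have hev : deriv (T9 β 1 δ ϖ) =ᶠ[𝓝[>] (-ϖ / δ)]
          fun x => β * δ * (δ * x + ϖ) ^ (β - 1) := by
        filter_upwards [self_mem_nhdsWithin] with x hx using hderiv x hx
      refine Tendsto.congr' hev.symm ?_
      have h2 : Tendsto (fun x : ℝ => (δ * x + ϖ) ^ (β - 1)) (𝓝[>] (-ϖ / δ)) atTop :=
        (tendsto_rpow_nhdsGT_zero_atTop (by linarith)).comp (z_tendsto hδ)
      exact h2.const_mul_atTop (by positivity)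
    · intro h; exact absurd h (lt_irrefl 1)
    · have hev : deriv (T9 β 1 δ ϖ) =ᶠ[atTop]
          fun x => β * δ * (δ * x + ϖ) ^ (β - 1) := by
        filter_upwards [eventually_gt_atTop (-ϖ / δ)] with x hx using hderiv x hx
      refine Tendsto.congr' hev.symm ?_
      have h2 : Tendsto (fun x : ℝ => (δ * x + ϖ) ^ (β - 1)) atTop (𝓝 0) := by
        have h3 := (tendsto_rpow_neg_atTop (y := 1 - β) (by linarith)).comp (z_tendsto_atTop (ϖ := ϖ) hδ)
        simpa only [Function.comp_def, show -(1 - β) = β - 1 by ring] using h3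
      simpa using h2.const_mul (β * δ)
  · -- case 1 < ρ
    have hne : ρ ≠ 1 := ne_of_gt h1
    have hne1 : (1 : ℝ) - ρ ≠ 0 := by linarith
    have hT0 : T9 β ρ δ ϖ (-ϖ / δ) = 0 := by simp [T9, hne, hzL]
    have hHD : ∀ x : ℝ, -ϖ / δ < x → HasDerivAt (T9 β ρ δ ϖ)
        (β * δ * ((1 - β) * (δ * x + ϖ) ^ (ρ - 1) + β) ^ (ρ / (1 - ρ))) x :=
      fun x hx => hasDerivAt_T9 hβ0 hβ1 hδ h1 (z_pos hδ hx)
    have hderiv : ∀ x : ℝ, -ϖ / δ < x → deriv (T9 β ρ δ ϖ) x =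
        β * δ * ((1 - β) * (δ * x + ϖ) ^ (ρ - 1) + β) ^ (ρ / (1 - ρ)) :=
      fun x hx => (hHD x hx).deriv
    have hin_pos : ∀ x : ℝ, -ϖ / δ ≤ x → 0 < (1 - β) * (δ * x + ϖ) ^ (ρ - 1) + β := by
      intro x hx
      have h4 := Real.rpow_nonneg (z_nonneg hδ hx) (ρ - 1)
      nlinarith
    refine ⟨hT0, hLpos, ?_, ?_, ?_, ?_, ?_⟩
    · -- strict mono
      intro x hx y hy hxy
      have hzy : 0 < δ * y + ϖ := z_pos hδ (lt_of_le_of_lt hx hxy)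
      have huy : 0 < (1 - β) + β * (δ * y + ϖ) ^ (1 - ρ) := by
        have := Real.rpow_pos_of_pos hzy (1 - ρ); nlinarith
      have hTy : 0 < T9 β ρ δ ϖ y := by
        simp only [T9, if_neg hne, if_neg hzy.ne']
        exact Real.rpow_pos_of_pos huy _
      rcases eq_or_lt_of_le (z_nonneg hδ hx) with hzx | hzx
      · have hx0 : T9 β ρ δ ϖ x = 0 := by simp [T9, hne, ← hzx]
        rw [hx0]; exact hTy
      · simp only [T9, if_neg hne, if_neg hzx.ne', if_neg hzy.ne']
        have hzz : δ * x + ϖ < δ * y + ϖ := by nlinarith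
        have hlt1 : (δ * y + ϖ) ^ (1 - ρ) < (δ * x + ϖ) ^ (1 - ρ) :=
          Real.rpow_lt_rpow_of_neg hzx hzz (by linarith)
        have hlt : (1 - β) + β * (δ * y + ϖ) ^ (1 - ρ) <
            (1 - β) + β * (δ * x + ϖ) ^ (1 - ρ) := by nlinarith
        exact Real.rpow_lt_rpow_of_neg huy hlt (div_neg_of_pos_of_neg one_pos (by linarith))
    · -- concave
      apply AntitoneOn.concaveOn_of_deriv (convex_Ici _)
      · -- continuity
        intro x hx
        rcases eq_or_lt_of_le (z_nonneg hδ hx) with hzx | hzx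
        · -- endpoint
          have hxL : x = -ϖ / δ := by
            rw [eq_div_iff hδ.ne']
            linear_combination -hzx
          subst hxL
          rw [← continuousWithinAt_Ioi_iff_Ici]
          unfold ContinuousWithinAt
          rw [hT0]
          have hevF : (fun f => ((1 - β) + β * (δ * f + ϖ) ^ (1 - ρ)) ^ (1 / (1 - ρ)))
              =ᶠ[𝓝[>] (-ϖ / δ)] T9 β ρ δ ϖ := by
            filter_upwards [self_mem_nhdsWithin] with w hw
            simp [T9, hne, (z_pos hδ hw).ne']
          have hu_top : Tendsto (fun f : ℝ => (1 - β) + β * (δ * f + ϖ) ^ (1 - ρ))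
              (𝓝[>] (-ϖ / δ)) atTop := by
            have h2 : Tendsto (fun f : ℝ => (δ * f + ϖ) ^ (1 - ρ)) (𝓝[>] (-ϖ / δ)) atTop :=
              (tendsto_rpow_nhdsGT_zero_atTop (by linarith)).comp (z_tendsto hδ)
            exact tendsto_atTop_add_const_left _ _ (h2.const_mul_atTop hβ0)
          have houter : Tendsto (fun u : ℝ => u ^ (1 / (1 - ρ))) atTop (𝓝 0) := by
            rw [show (1 : ℝ) / (1 - ρ) = -(1 / (ρ - 1)) by
              rw [show (1 : ℝ) - ρ = -(ρ - 1) by ring, div_neg]]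
            exact tendsto_rpow_neg_atTop (one_div_pos.mpr (by linarith))
          exact Tendsto.congr' hevF (houter.comp hu_top)
        · exact (hHD x (by
            rw [lt_iff_le_and_ne]
            refine ⟨hx, ?_⟩
            intro he
            rw [← he] at hzx
            rw [hzL] at hzx
            exact lt_irrefl 0 hzx)).continuousAt.continuousWithinAt
      · rw [interior_Ici]
        exact fun x hx => (hHD x hx).differentiableAt.differentiableWithinAt
      · rw [interior_Ici]
        intro x hx y hy hxy
        rw [hderiv x hx, hderiv y hy]
        have hzx := z_pos hδ hx
        have hle1 : (δ * x + ϖ) ^ (ρ - 1) ≤ (δ * y + ϖ) ^ (ρ - 1) :=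
          Real.rpow_le_rpow hzx.le (by nlinarith) (by linarith)
        have hle : ((1 - β) * (δ * y + ϖ) ^ (ρ - 1) + β) ^ (ρ / (1 - ρ)) ≤
            ((1 - β) * (δ * x + ϖ) ^ (ρ - 1) + β) ^ (ρ / (1 - ρ)) :=
          Real.rpow_le_rpow_of_nonpos (hin_pos x hx.le) (by nlinarith)
            (le_of_lt (div_neg_of_pos_of_neg (by linarith) (by linarith)))
        exact mul_le_mul_of_nonneg_left hle (by positivity)
    · intro h; exact absurd h (ne_of_gt h1)
    · -- endpoint limit
      intro _
      have hev : deriv (T9 β ρ δ ϖ) =ᶠ[𝓝[>] (-ϖ / δ)]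
          fun x => β * δ * ((1 - β) * (δ * x + ϖ) ^ (ρ - 1) + β) ^ (ρ / (1 - ρ)) := by
        filter_upwards [self_mem_nhdsWithin] with x hx using hderiv x hx
      refine Tendsto.congr' hev.symm ?_
      have hinc : ContinuousAt (fun x : ℝ => (δ * x + ϖ) ^ (ρ - 1)) (-ϖ / δ) :=
        (Real.continuousAt_rpow_const _ _ (Or.inr (by linarith))).comp (by fun_prop)
      have hin : ContinuousAt (fun x : ℝ => (1 - β) * (δ * x + ϖ) ^ (ρ - 1) + β) (-ϖ / δ) :=
        (continuousAt_const.mul hinc).add continuousAt_const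
      have hvD : (1 - β) * (δ * (-ϖ / δ) + ϖ) ^ (ρ - 1) + β = β := by
        rw [hzL, Real.zero_rpow (by linarith : ρ - 1 ≠ 0)]; ring
      have houtc : ContinuousAt (fun u : ℝ => β * δ * u ^ (ρ / (1 - ρ))) β :=
        continuousAt_const.mul (Real.continuousAt_rpow_const β _ (Or.inl hβ0.ne'))
      have h2 : Tendsto (fun x : ℝ => (1 - β) * (δ * x + ϖ) ^ (ρ - 1) + β)
          (𝓝 (-ϖ / δ)) (𝓝 β) := by
        simpa only [hvD] using hin.tendsto
      have hDc : Tendsto (fun x : ℝ => β * δ * ((1 - β) * (δ * x + ϖ) ^ (ρ - 1) + β) ^ (ρ / (1 - ρ)))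
          (𝓝 (-ϖ / δ)) (𝓝 (β * δ * β ^ (ρ / (1 - ρ)))) := houtc.tendsto.comp h2
      have hval : (β * δ ^ (1 - ρ)) ^ (1 / (1 - ρ)) = β * δ * β ^ (ρ / (1 - ρ)) := by
        rw [Real.mul_rpow hβ0.le (Real.rpow_nonneg hδ.le _), ← Real.rpow_mul hδ.le,
          mul_one_div_cancel hne1, Real.rpow_one,
          show (1 : ℝ) / (1 - ρ) = 1 + ρ / (1 - ρ) by field_simp; ring,
          Real.rpow_add hβ0, Real.rpow_one]
        ring
      rw [hval]
      exact hDc.mono_left nhdsWithin_le_nhds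
    · -- atTop limit
      have hev : deriv (T9 β ρ δ ϖ) =ᶠ[atTop]
          fun x => β * δ * ((1 - β) * (δ * x + ϖ) ^ (ρ - 1) + β) ^ (ρ / (1 - ρ)) := by
        filter_upwards [eventually_gt_atTop (-ϖ / δ)] with x hx using hderiv x hx
      refine Tendsto.congr' hev.symm ?_
      have hin_top : Tendsto (fun x : ℝ => (1 - β) * (δ * x + ϖ) ^ (ρ - 1) + β) atTop atTop := by
        refine tendsto_atTop_add_const_right _ _ ?_
        exact ((tendsto_rpow_atTop (by linarith : (0:ℝ) < ρ - 1)).comp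
          (z_tendsto_atTop (ϖ := ϖ) hδ)).const_mul_atTop (by linarith)
      have hout : Tendsto (fun u : ℝ => u ^ (ρ / (1 - ρ))) atTop (𝓝 0) := by
        rw [show ρ / (1 - ρ) = -(ρ / (ρ - 1)) by
          rw [show (1 : ℝ) - ρ = -(ρ - 1) by ring, div_neg]]
        exact tendsto_rpow_neg_atTop (div_pos (by linarith) (by linarith))
      simpa using (hout.comp hin_top).const_mul (β * δ)
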